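/- Assume f satisfies (f1) and (f2) with constant B ∈ [1,∞), and let ψ, φ, ε₁, ε₂ be the Emden–Fowler model data. For a function η define N[η](ρ) := (e^{−ρ+1}/4) · ( f(φ(ρ)+η(ρ)) − f(φ(ρ)) − f'(φ(ρ))·η(ρ) ). Let M > 0 and let η₁, η₂ be functions on (1,∞) satisfying |ηᵢ(ρ)| ≤ M · f(φ(ρ))·F(φ(ρ)) · sup_{τ ≥ ρ} ( ε₁(τ) + ε₂(τ) ) for i = 1, 2 and all sufficiently large ρ. Then there exist ρ₀ > 1 and C > 0 such that for all ρ ≥ ρ₀: | N[η₁](ρ) − N[η₂](ρ) | ≤ (C/ρ) · sup_{τ ≥ ρ} ( ε₁(τ) + ε₂(τ) ) · | η₁(ρ) − η₂(ρ) |. -/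

import Mathlib

set_option maxHeartbeats 1000000


open MeasureTheory Filter

/-- `Fint f s = ∫_s^∞ dτ / f(τ)`. -/
noncomputable def Fint (f : ℝ → ℝ) (s : ℝ) : ℝ := ∫ τ in Set.Ioi s, 1 / f τ

/-- `1/B₁[f](s) = (−log F(s))·(1 − f'(s)·F(s))`, with `G` playing the role of `F`. -/
noncomputable def invB1 (f G : ℝ → ℝ) (s : ℝ) : ℝ :=
  (-Real.log (G s)) * (1 - deriv f s * G s)

/-- `1/B₂[f](s) = f'(s)·F(s)·(log F(s))²·(f(s)·f''(s)·F(s)/f'(s) − 1)`,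
with `G` playing the role of `F`. -/
noncomputable def invB2 (f G : ℝ → ℝ) (s : ℝ) : ℝ :=
  deriv f s * G s * (Real.log (G s)) ^ 2 *
    (f s * deriv (deriv f) s * G s / deriv f s - 1)

/-- The model singular solution `v`. -/
noncomputable def modelv (B t : ℝ) : ℝ :=
  if B = 1 then Real.log (-2 * Real.log t) else (-2 * Real.log t) ^ ((B - 1) / B)

/-- The model nonlinearity `g`. -/
noncomputable def modelg (B s : ℝ) : ℝ :=
  if B = 1 then 4 * Real.exp (Real.exp s - 2 * s)
  else (4 / (B * (B / (B - 1)))) * s ^ (1 - 2 * (B / (B - 1))) * Real.exp (s ^ (B / (B - 1)))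

/-- The model function `G(s) = ∫_s^∞ dτ/g(τ)` in closed form. -/
noncomputable def modelG (B s : ℝ) : ℝ :=
  if B = 1 then (1 / 4) * (Real.exp s + 1) * Real.exp (-Real.exp s)
  else (B / 4) * (s ^ (B / (B - 1)) + 1) * Real.exp (-(s ^ (B / (B - 1))))

/-- The Emden–Fowler model profile `ψ`. -/
noncomputable def modelpsi (B ρ : ℝ) : ℝ :=
  if B = 1 then Real.log (ρ - 1) else (ρ - 1) ^ ((B - 1) / B)

/-- `ε₁(ρ) = |1/B₁[f](φ(ρ)) − 1/B₁[g](ψ(ρ))|`. -/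
noncomputable def eps1 (f φ : ℝ → ℝ) (B ρ : ℝ) : ℝ :=
  |invB1 f (Fint f) (φ ρ) - invB1 (modelg B) (modelG B) (modelpsi B ρ)|

/-- `ε₂(ρ) = |1/B₂[f](φ(ρ)) − 1/B₂[g](ψ(ρ))|`. -/
noncomputable def eps2 (f φ : ℝ → ℝ) (B ρ : ℝ) : ℝ :=
  |invB2 f (Fint f) (φ ρ) - invB2 (modelg B) (modelG B) (modelpsi B ρ)|

/-- The inhomogeneous term
`I(ρ) = f(φ)F(φ) · ψ'² / (g(ψ)²G(ψ)²) · (f'(φ)F(φ) − g'(ψ)G(ψ))`. -/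
noncomputable def Ifun (f φ : ℝ → ℝ) (B ρ : ℝ) : ℝ :=
  f (φ ρ) * Fint f (φ ρ) *
    ((deriv (modelpsi B) ρ) ^ 2 / ((modelg B (modelpsi B ρ)) ^ 2 * (modelG B (modelpsi B ρ)) ^ 2)) *
    (deriv f (φ ρ) * Fint f (φ ρ) - deriv (modelg B) (modelpsi B ρ) * modelG B (modelpsi B ρ))

/-- The nonlinear remainder operator
`N[η](ρ) = (e^{−ρ+1}/4)(f(φ+η) − f(φ) − f'(φ)η)`. -/
noncomputable def Nop (f φ η : ℝ → ℝ) (ρ : ℝ) : ℝ :=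
  (Real.exp (-ρ + 1) / 4) * (f (φ ρ + η ρ) - f (φ ρ) - deriv f (φ ρ) * η ρ)

private lemma mvt_abs_le {g g' : ℝ → ℝ} {a b C : ℝ} (h : a < b)
    (hd : ∀ x ∈ Set.Icc a b, HasDerivAt g (g' x) x)
    (hC : ∀ x ∈ Set.Icc a b, |g' x| ≤ C) :
    |g b - g a| ≤ C * (b - a) := by
  obtain ⟨c, hc, hslope⟩ := exists_hasDerivAt_eq_slope g g' h
    (fun x hx => (hd x hx).continuousAt.continuousWithinAt)
    (fun x hx => hd x (Set.mem_Icc_of_Ioo hx))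
  have hba : b - a ≠ 0 := sub_ne_zero.2 h.ne'
  have heq : g b - g a = g' c * (b - a) := by
    rw [hslope]; field_simp
  rw [heq, abs_mul, abs_of_pos (sub_pos.2 h)]
  exact mul_le_mul_of_nonneg_right (hC c (Set.mem_Icc_of_Ioo hc)) (by linarith)

private lemma mvt_abs {g g' : ℝ → ℝ} {a b C : ℝ}
    (hd : ∀ x ∈ Set.uIcc a b, HasDerivAt g (g' x) x)
    (hC : ∀ x ∈ Set.uIcc a b, |g' x| ≤ C) :
    |g b - g a| ≤ C * |b - a| := by
  rcases lt_trichotomy a b with h | h | h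
  · rw [abs_of_pos (sub_pos.2 h)]
    exact mvt_abs_le h (fun x hx => hd x (by rwa [Set.uIcc_of_le h.le]))
      (fun x hx => hC x (by rwa [Set.uIcc_of_le h.le]))
  · subst h; simp
  · rw [abs_sub_comm, abs_sub_comm b a, abs_of_pos (sub_pos.2 h)]
    exact mvt_abs_le h (fun x hx => hd x (by rwa [Set.uIcc_of_ge h.le]))
      (fun x hx => hC x (by rwa [Set.uIcc_of_ge h.le]))

private lemma Fint_eq_add {f : ℝ → ℝ} {a b : ℝ} (hab : a ≤ b)
    (hint : IntegrableOn (fun τ => 1 / f τ) (Set.Ioi a)) :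
    Fint f a = (∫ τ in a..b, 1 / f τ) + Fint f b := by
  have h1 : IntegrableOn (fun τ => 1 / f τ) (Set.Ioc a b) :=
    hint.mono_set Set.Ioc_subset_Ioi_self
  have h2 : IntegrableOn (fun τ => 1 / f τ) (Set.Ioi b) :=
    hint.mono_set (Set.Ioi_subset_Ioi hab)
  rw [Fint, Fint, ← Set.Ioc_union_Ioi_eq_Ioi hab,
    MeasureTheory.setIntegral_union (Set.Ioc_disjoint_Ioi le_rfl) measurableSet_Ioi h1 h2,
    intervalIntegral.integral_of_le hab]

private lemma Fint_pos' {f : ℝ → ℝ} {s₀ s : ℝ} (hs : s₀ < s)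
    (hfpos : ∀ τ, s₀ < τ → 0 < f τ)
    (hint : IntegrableOn (fun τ => 1 / f τ) (Set.Ioi s)) :
    0 < Fint f s := by
  have hpos : ∀ τ ∈ Set.Ioi s, 0 < 1 / f τ := fun τ hτ =>
    div_pos one_pos (hfpos τ (hs.trans hτ))
  refine (setIntegral_pos_iff_support_of_nonneg_ae ?_ hint).2 ?_
  · exact (ae_restrict_iff' measurableSet_Ioi).2 (ae_of_all _ fun τ hτ => (hpos τ hτ).le)
  · have hsub : Set.Ioi s ⊆ Function.support (fun τ => 1 / f τ) ∩ Set.Ioi s :=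
      Set.subset_inter (fun τ hτ => (hpos τ hτ).ne') subset_rfl
    calc (0 : ENNReal) < volume (Set.Ioi s) := by rw [Real.volume_Ioi]; exact ENNReal.zero_lt_top
      _ ≤ _ := measure_mono hsub

private lemma Fint_anti' {f : ℝ → ℝ} {s₀ a b : ℝ} (ha : s₀ < a) (hab : a ≤ b)
    (hfpos : ∀ τ, s₀ < τ → 0 < f τ)
    (hint : IntegrableOn (fun τ => 1 / f τ) (Set.Ioi a)) :
    Fint f b ≤ Fint f a := by
  refine setIntegral_mono_set hint ?_ (HasSubset.Subset.eventuallyLE (Set.Ioi_subset_Ioi hab))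
  exact (ae_restrict_iff' measurableSet_Ioi).2 (ae_of_all _ fun τ hτ =>
    (div_pos one_pos (hfpos τ (ha.trans hτ))).le)

private lemma Fint_hasDerivAt' {f : ℝ → ℝ} {s₀ s : ℝ} (hs : s₀ < s)
    (hcont : ContinuousOn (fun τ => 1 / f τ) (Set.Ioi s₀))
    (hfint : ∀ t, s₀ < t → IntegrableOn (fun τ => 1 / f τ) (Set.Ioi t)) :
    HasDerivAt (Fint f) (-(1 / f s)) s := by
  set c2 : ℝ := (s₀ + s) / 2 with hc2
  set c1 : ℝ := (s₀ + c2) / 2 with hc1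
  have hc2s : c2 < s := by simp only [hc2]; linarith
  have hs₀c2 : s₀ < c2 := by simp only [hc2]; linarith
  have hs₀c1 : s₀ < c1 := by simp only [hc1]; linarith
  have hc1c2 : c1 < c2 := by simp only [hc1]; linarith
  have hii : IntervalIntegrable (fun τ => 1 / f τ) volume c2 s := by
    refine (hfint c1 hs₀c1).mono_set ?_ |>.intervalIntegrable
    rw [Set.uIcc_of_le hc2s.le]
    exact fun x hx => lt_of_lt_of_le hc1c2 hx.1
  have hder : HasDerivAt (fun t => Fint f c2 - ∫ τ in c2..t, 1 / f τ) (-(1 / f s)) s :=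
    ((intervalIntegral.integral_hasDerivAt_right hii
      (hcont.stronglyMeasurableAtFilter isOpen_Ioi s hs)
      (hcont.continuousAt (Ioi_mem_nhds hs)))).const_sub (Fint f c2)
  refine hder.congr_of_eventuallyEq ?_
  filter_upwards [Ioi_mem_nhds hc2s] with t ht
  have := Fint_eq_add (le_of_lt ht) (hfint c2 hs₀c2)
  linarith

private lemma Fint_tendsto_zero' {f : ℝ → ℝ} {s₀ : ℝ}
    (hfint : ∀ t, s₀ < t → IntegrableOn (fun τ => 1 / f τ) (Set.Ioi t)) :
    Tendsto (Fint f) atTop (nhds 0) := by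
  have hcs : s₀ < s₀ + 1 := by linarith
  have hI : Tendsto (fun t => ∫ τ in (s₀ + 1)..t, 1 / f τ) atTop (nhds (Fint f (s₀ + 1))) :=
    intervalIntegral_tendsto_integral_Ioi _ (hfint _ hcs) tendsto_id
  have h2 : Tendsto (fun t => Fint f (s₀ + 1) - ∫ τ in (s₀ + 1)..t, 1 / f τ) atTop
      (nhds (Fint f (s₀ + 1) - Fint f (s₀ + 1))) := tendsto_const_nhds.sub hI
  rw [sub_self] at h2
  refine h2.congr' ?_
  filter_upwards [eventually_ge_atTop (s₀ + 1)] with t ht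
  have := Fint_eq_add ht (hfint _ hcs)
  linarith

/-- Lemma 2.3: Lipschitz-type contraction estimate for the nonlinear term `N`
on functions of size `O(f(φ)F(φ) sup_{τ ≥ ρ}(ε₁+ε₂))`. -/
theorem stmt9 (f φ η₁ η₂ : ℝ → ℝ) (s₀ B M : ℝ) (hs₀ : 0 < s₀)
    (hf : ContDiffOn ℝ 2 f (Set.Ioi s₀))
    (hfpos : ∀ s, s₀ < s → 0 < f s)
    (hf' : ∀ s, s₀ < s → 0 < deriv f s)
    (hfint : ∀ s, s₀ < s → IntegrableOn (fun τ => 1 / f τ) (Set.Ioi s))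
    (hB : 1 ≤ B)
    (hf2a : Tendsto (fun s => deriv f s * Fint f s) atTop (nhds 1))
    (hf2b : Tendsto (fun s => invB2 f (Fint f) s) atTop (nhds (1 / B)))
    (hφ : ∀ ρ > (1 : ℝ), s₀ < φ ρ ∧ Fint f (φ ρ) = (B / 4) * ρ * Real.exp (-ρ + 1))
    (hM : 0 < M)
    (hη : ∃ ρ₁ > (1 : ℝ), ∀ ρ ≥ ρ₁,
      |η₁ ρ| ≤ M * f (φ ρ) * Fint f (φ ρ) *
          sSup ((fun τ => eps1 f φ B τ + eps2 f φ B τ) '' Set.Ici ρ)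
      ∧ |η₂ ρ| ≤ M * f (φ ρ) * Fint f (φ ρ) *
          sSup ((fun τ => eps1 f φ B τ + eps2 f φ B τ) '' Set.Ici ρ)) :
    ∃ ρ₀ > (1 : ℝ), ∃ C > (0 : ℝ), ∀ ρ ≥ ρ₀,
      |Nop f φ η₁ ρ - Nop f φ η₂ ρ|
        ≤ (C / ρ) * sSup ((fun τ => eps1 f φ B τ + eps2 f φ B τ) '' Set.Ici ρ)
            * |η₁ ρ - η₂ ρ| := by
  obtain ⟨ρ₁, hρ₁gt, hηb⟩ := hη
  have hBpos : (0:ℝ) < B := lt_of_lt_of_le one_pos hB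
  have hcont1f : ContinuousOn (fun τ => 1 / f τ) (Set.Ioi s₀) :=
    continuousOn_const.div hf.continuousOn (fun x hx => (hfpos x hx).ne')
  have hFd : ∀ s, s₀ < s → HasDerivAt (Fint f) (-(1 / f s)) s :=
    fun s hs => Fint_hasDerivAt' hs hcont1f hfint
  have hFpos : ∀ s, s₀ < s → 0 < Fint f s := fun s hs => Fint_pos' hs hfpos (hfint s hs)
  have hF0 : Tendsto (Fint f) atTop (nhds 0) := Fint_tendsto_zero' hfint
  have hfD : ∀ s, s₀ < s → HasDerivAt f (deriv f s) s := fun s hs =>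
    ((hf.differentiableOn (by norm_num)).differentiableAt (Ioi_mem_nhds hs)).hasDerivAt
  have hfd1 : ContDiffOn ℝ 1 (deriv f) (Set.Ioi s₀) :=
    hf.deriv_of_isOpen isOpen_Ioi (by norm_num)
  have hfD2 : ∀ s, s₀ < s → HasDerivAt (deriv f) (deriv (deriv f) s) s := fun s hs =>
    ((hfd1.differentiableOn (by norm_num)).differentiableAt (Ioi_mem_nhds hs)).hasDerivAt
  have hfFd : ∀ x, s₀ < x → HasDerivAt (fun s => f s * Fint f s)
      (deriv f x * Fint f x - 1) x := by
    intro x hx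
    have h := (hfD x hx).mul (hFd x hx)
    have he : deriv f x * Fint f x + f x * -(1 / f x) = deriv f x * Fint f x - 1 := by
      field_simp [(hfpos x hx).ne']
      ring
    rwa [he] at h
  have hφF : ∀ ρ > (1:ℝ), Fint f (φ ρ) = B / 4 * ρ * Real.exp (-ρ + 1) :=
    fun ρ hρ => (hφ ρ hρ).2
  have hφs₀ : ∀ ρ > (1:ℝ), s₀ < φ ρ := fun ρ hρ => (hφ ρ hρ).1
  have hFφ0 : Tendsto (fun ρ => Fint f (φ ρ)) atTop (nhds 0) := by
    have h1 : Tendsto (fun ρ : ℝ => B / 4 * Real.exp 1 * (ρ ^ 1 * Real.exp (-ρ))) atTop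
        (nhds (B / 4 * Real.exp 1 * 0)) :=
      (Real.tendsto_pow_mul_exp_neg_atTop_nhds_zero 1).const_mul _
    rw [mul_zero] at h1
    refine h1.congr' ?_
    filter_upwards [eventually_gt_atTop 1] with ρ hρ
    rw [hφF ρ hρ, show -ρ + 1 = -ρ + 1 from rfl, Real.exp_add]
    ring
  have hφtop : Tendsto φ atTop atTop := by
    rw [tendsto_atTop]
    intro c
    have hc' : s₀ < max c s₀ + 1 := by
      have := le_max_right c s₀; linarith
    have hFc' : 0 < Fint f (max c s₀ + 1) := hFpos _ hc'
    filter_upwards [hFφ0.eventually_lt_const hFc', eventually_gt_atTop 1] with ρ h1 h2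
    by_contra hcon
    push_neg at hcon
    have hle : φ ρ ≤ max c s₀ + 1 := by
      have := le_max_left c s₀; linarith
    have := Fint_anti' (hφs₀ ρ h2) hle hfpos (hfint _ (hφs₀ ρ h2))
    linarith
  have hFev : ∀ᶠ s in atTop, s₀ < s := eventually_gt_atTop s₀
  have hFpos_ev : ∀ᶠ s in atTop, 0 < Fint f s := hFev.mono fun s hs => hFpos s hs
  have hFlt1 : ∀ᶠ s in atTop, Fint f s < 1 := hF0.eventually_lt_const one_pos
  have hFin : Tendsto (Fint f) atTop (nhdsWithin 0 (Set.Ioi 0)) :=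
    tendsto_nhdsWithin_iff.mpr ⟨hF0, hFpos_ev⟩
  have hlog : Tendsto (fun s => Real.log (Fint f s)) atTop atBot :=
    Real.tendsto_log_nhdsGT_zero.comp hFin
  have hneg : Tendsto (fun s => -Real.log (Fint f s)) atTop atTop :=
    tendsto_neg_atBot_atTop.comp hlog
  have hsq : Tendsto (fun s => (Real.log (Fint f s)) ^ 2) atTop atTop := by
    have h2 := (tendsto_pow_atTop (by norm_num : (2:ℕ) ≠ 0)).comp hneg
    refine h2.congr fun s => ?_
    simp [neg_pow]
  have hw : Tendsto (fun s => ((Real.log (Fint f s)) ^ 2)⁻¹) atTop (nhds 0) :=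
    hsq.inv_tendsto_atTop
  have hq : Tendsto (fun s => invB2 f (Fint f) s * (deriv f s * Fint f s)⁻¹ *
      ((Real.log (Fint f s)) ^ 2)⁻¹) atTop (nhds (1 / B * 1⁻¹ * 0)) :=
    (hf2b.mul (hf2a.inv₀ one_ne_zero)).mul hw
  rw [mul_zero] at hq
  have hb1 : Tendsto (fun s => f s * deriv (deriv f) s * Fint f s / deriv f s) atTop
      (nhds 1) := by
    have h0 : Tendsto (fun s => 1 + invB2 f (Fint f) s * (deriv f s * Fint f s)⁻¹ *
        ((Real.log (Fint f s)) ^ 2)⁻¹) atTop (nhds (1 + 0)) := tendsto_const_nhds.add hq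
    rw [add_zero] at h0
    refine Tendsto.congr' ?_ h0
    filter_upwards [hFev, hFpos_ev, hFlt1] with s hs hFp hF1
    have hfp' := hf' s hs
    have hlogne : Real.log (Fint f s) ≠ 0 := ne_of_lt (Real.log_neg hFp hF1)
    rw [invB2]
    field_simp
    ring
  by_cases hbdd : ∃ ρs > (1:ℝ), BddAbove ((fun τ => eps1 f φ B τ + eps2 f φ B τ) '' Set.Ici ρs)
  case neg =>
    push_neg at hbdd
    refine ⟨max ρ₁ 2, lt_of_lt_of_le one_lt_two (le_max_right _ _), 1, one_pos, fun ρ hρ => ?_⟩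
    have hρ1 : ρ₁ ≤ ρ := le_trans (le_max_left _ _) hρ
    have hρgt1 : (1:ℝ) < ρ := lt_of_lt_of_le one_lt_two (le_trans (le_max_right _ _) hρ)
    have hS0 : sSup ((fun τ => eps1 f φ B τ + eps2 f φ B τ) '' Set.Ici ρ) = 0 := by
      rw [csSup_of_not_bddAbove (hbdd ρ hρgt1), Real.sSup_empty]
    obtain ⟨h1, h2⟩ := hηb ρ hρ1
    rw [hS0, mul_zero] at h1 h2
    have e1 : η₁ ρ = 0 := abs_nonpos_iff.mp h1
    have e2 : η₂ ρ = 0 := abs_nonpos_iff.mp h2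
    rw [hS0]
    simp [Nop, e1, e2]
  case pos =>
  obtain ⟨ρs, hρs1, hbddA⟩ := hbdd
  set Kv := sSup ((fun τ => eps1 f φ B τ + eps2 f φ B τ) '' Set.Ici ρs) with hKv
  have hKv0 : 0 ≤ Kv := by
    refine le_trans ?_ (le_csSup hbddA ⟨ρs, Set.self_mem_Ici, rfl⟩)
    simp only [eps1, eps2]
    exact add_nonneg (abs_nonneg _) (abs_nonneg _)
  clear_value Kv
  set K' : ℝ := Kv + 1 with hK'
  clear_value K'
  have hK'1 : (1:ℝ) ≤ K' := by rw [hK']; linarith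
  have hK'pos : (0:ℝ) < K' := by linarith
  have hMK' : 0 < M * K' := mul_pos hM hK'pos
  set θ : ℝ := 1 / (2 * (M * K')) with hθ
  clear_value θ
  have hθpos : 0 < θ := by rw [hθ]; positivity
  have hhalf : M * K' * θ = 1 / 2 := by
    rw [hθ]; field_simp
  have hev1 : ∀ᶠ s in atTop, |deriv f s * Fint f s - 1| ≤ θ := by
    have h := Metric.tendsto_nhds.mp hf2a θ hθpos
    exact h.mono fun s hs => by rw [Real.dist_eq] at hs; exact hs.le
  have hev2 : ∀ᶠ s in atTop, |deriv f s * Fint f s - 1| ≤ 1 / 2 := by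
    have h := Metric.tendsto_nhds.mp hf2a (1/2) (by norm_num)
    exact h.mono fun s hs => by rw [Real.dist_eq] at hs; exact hs.le
  have hev3 : ∀ᶠ s in atTop, |f s * deriv (deriv f) s * Fint f s / deriv f s| ≤ 2 := by
    have h := Metric.tendsto_nhds.mp hb1 1 one_pos
    refine h.mono fun s hs => ?_
    rw [Real.dist_eq] at hs
    rw [abs_le]; rw [abs_lt] at hs
    constructor <;> linarith [hs.1, hs.2]
  obtain ⟨s₁', hs₁'⟩ := eventually_atTop.mp ((hev1.and hev2).and hev3)
  set s₁ : ℝ := max s₁' (s₀ + 1) with hs₁def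
  have hs₁s₀ : s₀ < s₁ := lt_of_lt_of_le (by linarith) (le_max_right _ _)
  have hs₁ge : s₁' ≤ s₁ := le_max_left _ _
  clear_value s₁
  have hgood : ∀ s, s₁ ≤ s → s₀ < s ∧ (|deriv f s * Fint f s - 1| ≤ θ ∧
      |deriv f s * Fint f s - 1| ≤ 1/2) ∧
      |f s * deriv (deriv f) s * Fint f s / deriv f s| ≤ 2 := by
    intro s hs
    have h1 := hs₁' s (le_trans hs₁ge hs)
    exact ⟨lt_of_lt_of_le hs₁s₀ hs, h1.1, h1.2⟩
  have hs₁pos : 0 < s₁ := lt_trans hs₀ hs₁s₀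
  set c₀ : ℝ := f (s₁ + 1) * Fint f (s₁ + 1) with hc₀
  clear_value c₀
  have hgrow : ∀ s, s₁ + 1 ≤ s → f s * Fint f s ≤ c₀ + θ * s := by
    intro s hs
    have hm := mvt_abs (g := fun s => f s * Fint f s)
      (g' := fun x => deriv f x * Fint f x - 1) (a := s₁ + 1) (b := s) (C := θ)
      (fun x hx => hfFd x (by
        rw [Set.uIcc_of_le hs] at hx
        have := hx.1; linarith))
      (fun x hx => by
        rw [Set.uIcc_of_le hs] at hx
        exact ((hgood x (by linarith [hx.1])).2.1).1)
    have h2 : |s - (s₁ + 1)| = s - (s₁ + 1) := abs_of_nonneg (by linarith)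
    rw [h2] at hm
    have h3 := (abs_le.mp hm).2
    have h4 : 0 ≤ θ * (s₁ + 1) := by positivity
    rw [hc₀]
    nlinarith [h3, h4]
  set T : ℝ := 2 * (M * K' * c₀ + s₁ + 1) with hT
  clear_value T
  obtain ⟨ρ₂, hρ₂⟩ := eventually_atTop.mp (hφtop.eventually_ge_atTop (max (s₁ + 1) T))
  refine ⟨max (max ρ₁ ρs) (max ρ₂ 2),
    lt_of_lt_of_le one_lt_two (le_trans (le_max_right ρ₂ 2) (le_max_right _ _)),
    3 * M * Real.exp (7 * (M * K')) / B, div_pos (by positivity) hBpos, fun ρ hρ => ?_⟩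
  have hρρ₁ : ρ₁ ≤ ρ := le_trans (le_trans (le_max_left _ _) (le_max_left _ _)) hρ
  have hρρs : ρs ≤ ρ := le_trans (le_trans (le_max_right _ _) (le_max_left _ _)) hρ
  have hρ2 : (2:ℝ) ≤ ρ := le_trans (le_trans (le_max_right _ _) (le_max_right _ _)) hρ
  have hρ₂le : ρ₂ ≤ ρ := le_trans (le_trans (le_max_left _ _) (le_max_right _ _)) hρ
  have hρ1 : (1:ℝ) < ρ := lt_of_lt_of_le one_lt_two hρ2
  have hρpos : (0:ℝ) < ρ := by linarith
  have hps₀ : s₀ < φ ρ := hφs₀ ρ hρ1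
  have hFp : Fint f (φ ρ) = B / 4 * ρ * Real.exp (-ρ + 1) := hφF ρ hρ1
  have hφge : max (s₁ + 1) T ≤ φ ρ := hρ₂ ρ hρ₂le
  have hφT : T ≤ φ ρ := le_trans (le_max_right _ _) hφge
  have hφs₂ : s₁ + 1 ≤ φ ρ := le_trans (le_max_left _ _) hφge
  set p := φ ρ with hp
  clear_value p
  set S := sSup ((fun τ => eps1 f φ B τ + eps2 f φ B τ) '' Set.Ici ρ) with hS
  clear_value S
  have hbddρ : BddAbove ((fun τ => eps1 f φ B τ + eps2 f φ B τ) '' Set.Ici ρ) :=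
    hbddA.mono (Set.image_mono (Set.Ici_subset_Ici.mpr hρρs))
  have hSnn : 0 ≤ S := by
    rw [hS]
    refine le_trans ?_ (le_csSup hbddρ ⟨ρ, Set.self_mem_Ici, rfl⟩)
    simp only [eps1, eps2]
    exact add_nonneg (abs_nonneg _) (abs_nonneg _)
  have hSK : S ≤ K' := by
    have h1 : S ≤ Kv := by
      rw [hS, hKv]
      exact csSup_le_csSup hbddA ⟨_, ⟨ρ, Set.self_mem_Ici, rfl⟩⟩
        (Set.image_mono (Set.Ici_subset_Ici.mpr hρρs))
    rw [hK']; linarith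
  have hfp := hfpos p hps₀
  have hFpp := hFpos p hps₀
  have hfp0 : f p ≠ 0 := hfp.ne'
  have hFp0 : Fint f p ≠ 0 := hFpp.ne'
  have hfFp : 0 < f p * Fint f p := mul_pos hfp hFpp
  set δ : ℝ := M * f p * Fint f p * S with hδ
  clear_value δ
  have hδnn : 0 ≤ δ := by
    rw [hδ]
    exact mul_nonneg (mul_nonneg (mul_nonneg hM.le hfp.le) hFpp.le) hSnn
  have hδle : δ ≤ M * K' * (f p * Fint f p) := by
    calc δ = M * (f p * Fint f p) * S := by rw [hδ]; ring
      _ ≤ M * (f p * Fint f p) * K' := by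
          refine mul_le_mul_of_nonneg_left hSK (by positivity)
      _ = M * K' * (f p * Fint f p) := by ring
  have hWlow : s₁ < p - δ := by
    have hg := hgrow p hφs₂
    have h2 : M * K' * (f p * Fint f p) ≤ M * K' * (c₀ + θ * p) :=
      mul_le_mul_of_nonneg_left hg hMK'.le
    have h3 : M * K' * (c₀ + θ * p) = M * K' * c₀ + (M * K' * θ) * p := by ring
    rw [hhalf] at h3
    have h1 : δ ≤ M * K' * c₀ + 1 / 2 * p := by linarith
    linarith [hφT]
  set W := Set.Icc (p - δ) (p + δ) with hW
  have hWs₁ : ∀ τ ∈ W, s₁ ≤ τ := fun τ hτ => by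
    have := hτ.1; linarith [hWlow]
  have hWs₀ : ∀ τ ∈ W, s₀ < τ := fun τ hτ => lt_of_lt_of_le hs₁s₀ (hWs₁ τ hτ)
  have hpW : p ∈ W := ⟨by linarith, by linarith⟩
  have huIccW : ∀ τ ∈ W, ∀ x ∈ Set.uIcc p τ, x ∈ W := fun τ hτ x hx =>
    (Set.uIcc_subset_Icc hpW hτ) hx
  have hfFlow : ∀ τ ∈ W, f p * Fint f p / 2 ≤ f τ * Fint f τ := by
    intro τ hτ
    have hm := mvt_abs (g := fun s => f s * Fint f s)
      (g' := fun x => deriv f x * Fint f x - 1) (a := p) (b := τ) (C := θ)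
      (fun x hx => hfFd x (hWs₀ x (huIccW τ hτ x hx)))
      (fun x hx => ((hgood x (hWs₁ x (huIccW τ hτ x hx))).2.1).1)
    have hτδ : |τ - p| ≤ δ := abs_le.2 ⟨by linarith [hτ.1], by linarith [hτ.2]⟩
    have h1 : θ * |τ - p| ≤ θ * (M * K' * (f p * Fint f p)) :=
      mul_le_mul_of_nonneg_left (le_trans hτδ hδle) hθpos.le
    have h2 : θ * (M * K' * (f p * Fint f p)) = f p * Fint f p / 2 := by
      have h3 : θ * (M * K' * (f p * Fint f p)) = (M * K' * θ) * (f p * Fint f p) := by ring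
      rw [h3, hhalf]; ring
    have h5 := (abs_le.mp hm).1
    linarith
  have hFlow : ∀ ζ ∈ W, Real.exp (-(2 * (M * K'))) * Fint f p ≤ Fint f ζ := by
    intro ζ hζ
    have hm := mvt_abs (g := fun s => Real.log (Fint f s))
      (g' := fun x => -(1 / f x) / Fint f x) (a := p) (b := ζ)
      (C := 2 / (f p * Fint f p)) ?_ ?_
    · have hζδ : |ζ - p| ≤ δ := abs_le.2 ⟨by linarith [hζ.1], by linarith [hζ.2]⟩
      have h1 : 2 / (f p * Fint f p) * |ζ - p| ≤ 2 / (f p * Fint f p) * δ :=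
        mul_le_mul_of_nonneg_left hζδ (by positivity)
      have h2 : 2 / (f p * Fint f p) * δ = 2 * M * S := by
        rw [hδ]; field_simp
      have h3 : 2 * M * S ≤ 2 * (M * K') := by
        have := mul_le_mul_of_nonneg_left hSK (by positivity : (0:ℝ) ≤ 2 * M)
        linarith
      have h4 := (abs_le.mp hm).1
      have h5 : Real.log (Fint f p) - 2 * (M * K') ≤ Real.log (Fint f ζ) := by linarith
      have h6 := Real.exp_le_exp.mpr h5
      rw [Real.exp_log (hFpos ζ (hWs₀ ζ hζ)), Real.exp_sub, Real.exp_log hFpp] at h6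
      rw [Real.exp_neg]
      have h7 : (Real.exp (2 * (M * K')))⁻¹ * Fint f p =
          Fint f p / Real.exp (2 * (M * K')) := by ring
      rw [h7]; exact h6
    · intro x hx
      have hx0 := hWs₀ x (huIccW ζ hζ x hx)
      exact (hFd x hx0).log (hFpos x hx0).ne'
    · intro x hx
      have hxW := huIccW ζ hζ x hx
      have hx0 := hWs₀ x hxW
      have hfx := hfpos x hx0
      have hFx := hFpos x hx0
      have hflw := hfFlow x hxW
      show |-(1 / f x) / Fint f x| ≤ 2 / (f p * Fint f p)
      have he : -(1 / f x) / Fint f x = -(1 / (f x * Fint f x)) := by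
        field_simp
      rw [he, abs_neg, abs_of_pos (by positivity)]
      rw [div_le_div_iff₀ (by positivity) hfFp]
      linarith
  have hflowf : ∀ ζ ∈ W, Real.exp (-(3 * (M * K'))) * f p ≤ f ζ := by
    intro ζ hζ
    have hm := mvt_abs (g := fun s => Real.log (f s)) (g' := fun x => deriv f x / f x)
      (a := p) (b := ζ) (C := 3 / (f p * Fint f p)) ?_ ?_
    · have hζδ : |ζ - p| ≤ δ := abs_le.2 ⟨by linarith [hζ.1], by linarith [hζ.2]⟩
      have h1 : 3 / (f p * Fint f p) * |ζ - p| ≤ 3 / (f p * Fint f p) * δ :=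
        mul_le_mul_of_nonneg_left hζδ (by positivity)
      have h2 : 3 / (f p * Fint f p) * δ = 3 * M * S := by
        rw [hδ]; field_simp
      have h3 : 3 * M * S ≤ 3 * (M * K') := by
        have := mul_le_mul_of_nonneg_left hSK (by positivity : (0:ℝ) ≤ 3 * M)
        linarith
      have h4 := (abs_le.mp hm).1
      have h5 : Real.log (f p) - 3 * (M * K') ≤ Real.log (f ζ) := by linarith
      have h6 := Real.exp_le_exp.mpr h5
      rw [Real.exp_log (hfpos ζ (hWs₀ ζ hζ)), Real.exp_sub, Real.exp_log hfp] at h6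
      rw [Real.exp_neg]
      have h7 : (Real.exp (3 * (M * K')))⁻¹ * f p = f p / Real.exp (3 * (M * K')) := by ring
      rw [h7]; exact h6
    · intro x hx
      have hx0 := hWs₀ x (huIccW ζ hζ x hx)
      exact (hfD x hx0).log (hfpos x hx0).ne'
    · intro x hx
      have hxW := huIccW ζ hζ x hx
      have hx0 := hWs₀ x hxW
      have hfx := hfpos x hx0
      have hf'x := hf' x hx0
      have hFx := hFpos x hx0
      have hflw := hfFlow x hxW
      have ha2 := ((hgood x (hWs₁ x hxW)).2.1).2
      have ha3 : deriv f x * Fint f x ≤ 3 / 2 := by linarith [(abs_le.mp ha2).2]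
      show |deriv f x / f x| ≤ 3 / (f p * Fint f p)
      rw [abs_of_pos (div_pos hf'x hfx), div_le_div_iff₀ hfx hfFp]
      have k1 : f p * Fint f p ≤ 2 * (f x * Fint f x) := by linarith
      have k2 : deriv f x * (f p * Fint f p) ≤ deriv f x * (2 * (f x * Fint f x)) :=
        mul_le_mul_of_nonneg_left k1 hf'x.le
      have k3 : deriv f x * (2 * (f x * Fint f x)) = 2 * f x * (deriv f x * Fint f x) := by
        ring
      have k4 : 2 * f x * (deriv f x * Fint f x) ≤ 2 * f x * (3 / 2) :=
        mul_le_mul_of_nonneg_left ha3 (by positivity)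
      have k5 : 2 * f x * (3 / 2 : ℝ) = 3 * f x := by ring
      linarith
  have hCppb : ∀ ζ ∈ W, |deriv (deriv f) ζ| ≤
      3 * Real.exp (7 * (M * K')) / (f p * (Fint f p) ^ 2) := by
    intro ζ hζ
    have hζ0 := hWs₀ ζ hζ
    have hfζ := hfpos ζ hζ0
    have hFζ := hFpos ζ hζ0
    have hf'ζ := hf' ζ hζ0
    have hbb := (hgood ζ (hWs₁ ζ hζ)).2.2
    have ha2 := ((hgood ζ (hWs₁ ζ hζ)).2.1).2
    have hfl := hflowf ζ hζ
    have hFl := hFlow ζ hζ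
    have h1 : |deriv (deriv f) ζ| ≤ 2 * (deriv f ζ / (f ζ * Fint f ζ)) := by
      have he2 : |deriv (deriv f) ζ| = |f ζ * deriv (deriv f) ζ * Fint f ζ / deriv f ζ| *
          (deriv f ζ / (f ζ * Fint f ζ)) := by
        rw [abs_div, abs_mul, abs_mul, abs_of_pos hfζ, abs_of_pos hFζ, abs_of_pos hf'ζ]
        field_simp
      rw [he2]
      exact mul_le_mul_of_nonneg_right hbb (by positivity)
    have h2 : 2 * (deriv f ζ / (f ζ * Fint f ζ)) ≤ 3 / (f ζ * (Fint f ζ) ^ 2) := by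
      have he3 : 2 * (deriv f ζ / (f ζ * Fint f ζ)) = (2 * deriv f ζ) / (f ζ * Fint f ζ) := by
        ring
      rw [he3, div_le_div_iff₀ (by positivity) (by positivity)]
      have ha3 : deriv f ζ * Fint f ζ ≤ 3 / 2 := by linarith [(abs_le.mp ha2).2]
      have m1 : 2 * deriv f ζ * (f ζ * (Fint f ζ) ^ 2) =
          2 * ((f ζ * Fint f ζ) * (deriv f ζ * Fint f ζ)) := by ring
      have m2 : (f ζ * Fint f ζ) * (deriv f ζ * Fint f ζ) ≤ (f ζ * Fint f ζ) * (3 / 2) :=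
        mul_le_mul_of_nonneg_left ha3 (mul_pos hfζ hFζ).le
      have m3 : 3 * (f ζ * Fint f ζ) = 2 * ((f ζ * Fint f ζ) * (3 / 2)) := by ring
      linarith
    have h3 : 3 / (f ζ * (Fint f ζ) ^ 2) ≤
        3 * Real.exp (7 * (M * K')) / (f p * (Fint f p) ^ 2) := by
      rw [div_le_div_iff₀ (by positivity) (by positivity)]
      have e3 : (Real.exp (-(2 * (M * K'))) * Fint f p) ^ 2 ≤ (Fint f ζ) ^ 2 :=
        pow_le_pow_left₀ (by positivity) hFl 2
      have e4 : Real.exp (-(3 * (M * K'))) * f p *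
          ((Real.exp (-(2 * (M * K'))) * Fint f p) ^ 2) ≤ f ζ * (Fint f ζ) ^ 2 :=
        mul_le_mul hfl e3 (by positivity) hfζ.le
      have e6 : Real.exp (7 * (M * K')) * (Real.exp (-(3 * (M * K'))) *
          (Real.exp (-(2 * (M * K'))) * Real.exp (-(2 * (M * K'))))) = 1 := by
        rw [← Real.exp_add, ← Real.exp_add, ← Real.exp_add,
          show 7 * (M * K') + (-(3 * (M * K')) + (-(2 * (M * K')) + -(2 * (M * K')))) = 0
            by ring, Real.exp_zero]
      have e7 : 3 * Real.exp (7 * (M * K')) * (Real.exp (-(3 * (M * K'))) * f p *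
          ((Real.exp (-(2 * (M * K'))) * Fint f p) ^ 2)) = 3 * (f p * (Fint f p) ^ 2) := by
        linear_combination (3 * f p * (Fint f p) ^ 2) * e6
      have e8 := mul_le_mul_of_nonneg_left e4 (by positivity :
        (0:ℝ) ≤ 3 * Real.exp (7 * (M * K')))
      rw [e7] at e8
      linarith
    exact le_trans h1 (le_trans h2 h3)
  set Cpp : ℝ := 3 * Real.exp (7 * (M * K')) / (f p * (Fint f p) ^ 2) with hCpp
  clear_value Cpp
  have hCppnn : 0 ≤ Cpp := by rw [hCpp]; positivity
  obtain ⟨hb1η, hb2η⟩ := hηb ρ hρρ₁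
  have hδ1 : |η₁ ρ| ≤ δ := by rw [hδ, hp, hS]; exact hb1η
  have hδ2 : |η₂ ρ| ≤ δ := by rw [hδ, hp, hS]; exact hb2η
  have htmem : ∀ t ∈ Set.uIcc (η₂ ρ) (η₁ ρ), |t| ≤ δ := by
    intro t ht
    rcases Set.mem_uIcc.mp ht with h | h
    · rw [abs_le]
      exact ⟨by linarith [(abs_le.mp hδ2).1], by linarith [(abs_le.mp hδ1).2]⟩
    · rw [abs_le]
      exact ⟨by linarith [(abs_le.mp hδ1).1], by linarith [(abs_le.mp hδ2).2]⟩
  have hptW : ∀ t, |t| ≤ δ → p + t ∈ W := fun t ht =>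
    ⟨by linarith [(abs_le.mp ht).1], by linarith [(abs_le.mp ht).2]⟩
  have hstep2 : ∀ t ∈ Set.uIcc (η₂ ρ) (η₁ ρ), |deriv f (p + t) - deriv f p| ≤ Cpp * δ := by
    intro t ht
    have htδ := htmem t ht
    have hsub : Set.uIcc p (p + t) ⊆ W := Set.uIcc_subset_Icc hpW (hptW t htδ)
    have hm := mvt_abs (g := deriv f) (g' := deriv (deriv f)) (a := p) (b := p + t) (C := Cpp)
      (fun x hx => hfD2 x (hWs₀ x (hsub hx)))
      (fun x hx => hCppb x (hsub hx))
    have he : |p + t - p| = |t| := by rw [add_sub_cancel_left]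
    rw [he] at hm
    exact le_trans hm (mul_le_mul_of_nonneg_left htδ hCppnn)
  have hD : ∀ t ∈ Set.uIcc (η₂ ρ) (η₁ ρ), HasDerivAt (fun t => f (p + t) - deriv f p * t)
      (deriv f (p + t) - deriv f p) t := by
    intro t ht
    have hc : HasDerivAt (fun x : ℝ => p + x) 1 t := (hasDerivAt_id t).const_add p
    have h1 := (hfD (p + t) (hWs₀ _ (hptW t (htmem t ht)))).comp t hc
    have h2 : HasDerivAt (fun t : ℝ => f (p + t)) (deriv f (p + t)) t := by
      simpa [Function.comp_def] using h1
    simpa [Pi.sub_def] using h2.sub ((hasDerivAt_id t).const_mul (deriv f p))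
  have hmain := mvt_abs (hd := hD) (hC := hstep2)
  have hNdiff : Nop f φ η₁ ρ - Nop f φ η₂ ρ = (Real.exp (-ρ + 1) / 4) *
      ((f (p + η₁ ρ) - deriv f p * η₁ ρ) - (f (p + η₂ ρ) - deriv f p * η₂ ρ)) := by
    rw [hp]; simp only [Nop]; ring
  rw [hNdiff, abs_mul, abs_of_pos (by positivity : (0:ℝ) < Real.exp (-ρ + 1) / 4)]
  have hρ0 : ρ ≠ 0 := hρpos.ne'
  have hB0 : B ≠ 0 := hBpos.ne'
  have hex0 : Real.exp (-ρ + 1) ≠ 0 := (Real.exp_pos _).ne'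
  have hfinal : Real.exp (-ρ + 1) / 4 * (Cpp * δ) =
      3 * M * Real.exp (7 * (M * K')) / B / ρ * S := by
    rw [hCpp, hδ, hFp]
    field_simp
  calc Real.exp (-ρ + 1) / 4 *
      |f (p + η₁ ρ) - deriv f p * η₁ ρ - (f (p + η₂ ρ) - deriv f p * η₂ ρ)|
      ≤ Real.exp (-ρ + 1) / 4 * (Cpp * δ * |η₁ ρ - η₂ ρ|) :=
        mul_le_mul_of_nonneg_left hmain (by positivity)
    _ = (Real.exp (-ρ + 1) / 4 * (Cpp * δ)) * |η₁ ρ - η₂ ρ| := by ring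
    _ = 3 * M * Real.exp (7 * (M * K')) / B / ρ * S * |η₁ ρ - η₂ ρ| := by rw [hfinal]
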